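/- Let n ≥ 2 and suppose x : ℝ → ((Fin n → Bool) → ℝ) satisfies the TASEP master equation with rates α, β, h. Then the function t ↦ ⟨τ_0⟩(t) = Σ_{s : s 0 = true} x t s is differentiable and its derivative at every t equals h 1 * ⟨τ_1 ξ_0⟩(t) − β * ⟨τ_0⟩(t), where ⟨τ_1 ξ_0⟩(t) = Σ_{s : s 1 = true ∧ s 0 = false} x t s. -/

import Mathlib

open Finset

/-- The occupation status of site `k` in state `s` (false if `k` is not a valid site). -/
def occ (n : ℕ) (s : Fin n → Bool) (k : ℕ) : Bool :=
  if hk : k < n then s ⟨k, hk⟩ else false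

/-- Update the occupation status of site `k` in state `s` to `b`. -/
def upd (n : ℕ) (s : Fin n → Bool) (k : ℕ) (b : Bool) : Fin n → Bool :=
  if hk : k < n then Function.update s ⟨k, hk⟩ b else s

/-- `x : ℝ → (Fin n → Bool) → ℝ` satisfies the TASEP master equation with entry rate `α`,
exit rate `β` and internal rates `h`. -/
def MasterEq (n : ℕ) (α β : ℝ) (h : ℕ → ℝ) (x : ℝ → (Fin n → Bool) → ℝ) : Prop :=
  ∀ (s : Fin n → Bool) (t : ℝ),
    HasDerivAt (fun τ => x τ s)
      ((if occ n s (n-1) = true then α * x t (upd n s (n-1) false) else 0)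
        + (if occ n s 0 = false then β * x t (upd n s 0 true) else 0)
        + (∑ k ∈ Finset.Icc 1 (n-1),
            if occ n s k = false ∧ occ n s (k-1) = true
              then h k * x t (upd n (upd n s k true) (k-1) false) else 0)
        - x t s * ((if occ n s (n-1) = false then α else 0)
            + (if occ n s 0 = true then β else 0)
            + ∑ k ∈ Finset.Icc 1 (n-1),
                if occ n s k = true ∧ occ n s (k-1) = false then h k else 0)) t

private def flipb {n : ℕ} (i : Fin n) (s : Fin n → Bool) : Fin n → Bool :=
  Function.update s i (!(s i))

private lemma flipb_same {n : ℕ} (i : Fin n) (s : Fin n → Bool) : flipb i s i = !(s i) := by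
  simp [flipb]

private lemma flipb_ne {n : ℕ} {i j : Fin n} (h : j ≠ i) (s : Fin n → Bool) :
    flipb i s j = s j := by
  simp [flipb, Function.update_apply, h]

private lemma flipb_invol {n : ℕ} (i : Fin n) : Function.Involutive (flipb i) := by
  intro s; funext j
  by_cases hj : j = i
  · subst hj; simp [flipb]
  · simp [flipb, Function.update_apply, hj]

private lemma sum_flipb {n : ℕ} (i : Fin n) (g : (Fin n → Bool) → ℝ) :
    ∑ s, g s = ∑ s, g (flipb i s) :=
  (Fintype.sum_bijective (flipb i) (flipb_invol i).bijective _ g (fun _ => rfl)).symm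

private lemma sum_flipb2 {n : ℕ} (i j : Fin n) (g : (Fin n → Bool) → ℝ) :
    ∑ s, g s = ∑ s, g (flipb i (flipb j s)) :=
  (sum_flipb i g).trans (sum_flipb j (fun s => g (flipb i s)))

private lemma alpha_sum {n : ℕ} (i0 iL : Fin n) (hne : i0 ≠ iL) (c : ℝ)
    (y : (Fin n → Bool) → ℝ) :
    ∑ s, (if s i0 = true then (if s iL = true then c * y (Function.update s iL false) else 0) else 0)
      = ∑ s, (if s i0 = true then (if s iL = false then c * y s else 0) else 0) := by
  rw [sum_flipb iL]
  refine Finset.sum_congr rfl fun s _ => ?_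
  rw [flipb_ne hne, flipb_same]
  cases hsL : s iL
  · have hupd : Function.update (flipb iL s) iL false = s := by
      funext j
      by_cases hj : j = iL
      · subst hj; simp [hsL]
      · simp [flipb, Function.update_apply, hj]
    rw [hupd]; simp [hsL]
  · simp [hsL]

private lemma hop_sum0 {n : ℕ} (i0 i1 : Fin n) (hne : i1 ≠ i0) (c : ℝ)
    (y : (Fin n → Bool) → ℝ) :
    ∑ s, (if s i0 = true then
        (if s i1 = false ∧ s i0 = true then
          c * y (Function.update (Function.update s i1 true) i0 false) else 0) else 0)
      = ∑ s, (if s i1 = true ∧ s i0 = false then c * y s else 0) := by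
  rw [sum_flipb2 i1 i0]
  refine Finset.sum_congr rfl fun s _ => ?_
  have h0 : flipb i1 (flipb i0 s) i0 = !(s i0) := by rw [flipb_ne (Ne.symm hne), flipb_same]
  have h1 : flipb i1 (flipb i0 s) i1 = !(s i1) := by rw [flipb_same, flipb_ne hne]
  rw [h0, h1]
  cases hc1 : s i1 <;> cases hc0 : s i0
  · simp [hc1, hc0]
  · simp [hc1, hc0]
  · have hupd : Function.update (Function.update (flipb i1 (flipb i0 s)) i1 true) i0 false = s := by
      funext j
      by_cases hj0 : j = i0
      · subst hj0; simp [Function.update_apply, Ne.symm hne, hc0]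
      · by_cases hj1 : j = i1
        · subst hj1; simp [Function.update_apply, hj0, hc1]
        · rw [Function.update_apply, if_neg hj0, Function.update_apply, if_neg hj1,
            flipb_ne hj1, flipb_ne hj0]
    rw [hupd]; simp [hc0, hc1]
  · simp [hc1, hc0]

private lemma hop_sum {n : ℕ} (i0 i j : Fin n) (hij : i ≠ j) (h0i : i0 ≠ i) (h0j : i0 ≠ j)
    (c : ℝ) (y : (Fin n → Bool) → ℝ) :
    ∑ s, (if s i0 = true then
        (if s i = false ∧ s j = true then
          c * y (Function.update (Function.update s i true) j false) else 0) else 0)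
      = ∑ s, (if s i0 = true then (if s i = true ∧ s j = false then c * y s else 0) else 0) := by
  rw [sum_flipb2 i j]
  refine Finset.sum_congr rfl fun s _ => ?_
  have h0 : flipb i (flipb j s) i0 = s i0 := by rw [flipb_ne h0i, flipb_ne h0j]
  have hi : flipb i (flipb j s) i = !(s i) := by rw [flipb_same, flipb_ne hij]
  have hj' : flipb i (flipb j s) j = !(s j) := by rw [flipb_ne (Ne.symm hij), flipb_same]
  rw [h0, hi, hj']
  cases hci : s i <;> cases hcj : s j
  · simp [hci, hcj]
  · simp [hci, hcj]
  · have hupd : Function.update (Function.update (flipb i (flipb j s)) i true) j false = s := by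
      funext m
      by_cases hmj : m = j
      · subst hmj; simp [Function.update_apply, Ne.symm hij, hcj]
      · by_cases hmi : m = i
        · subst hmi; simp [Function.update_apply, hmj, hci]
        · rw [Function.update_apply, if_neg hmj, Function.update_apply, if_neg hmi,
            flipb_ne hmi, flipb_ne hmj]
    rw [hupd]; simp [hci, hcj]
  · simp [hci, hcj]

theorem tasep_occupation_derivative_exit
    (n : ℕ) (hn : 2 ≤ n) (α β : ℝ) (h : ℕ → ℝ)
    (x : ℝ → (Fin n → Bool) → ℝ) (hx : MasterEq n α β h x) (t : ℝ) :
    HasDerivAt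
      (fun τ => ∑ s ∈ Finset.univ.filter (fun s : Fin n → Bool => occ n s 0 = true), x τ s)
      (h 1 * (∑ s ∈ Finset.univ.filter
            (fun s : Fin n → Bool => occ n s 1 = true ∧ occ n s 0 = false), x t s)
        - β * (∑ s ∈ Finset.univ.filter
            (fun s : Fin n → Bool => occ n s 0 = true), x t s)) t := by
  classical
  have h0n : (0:ℕ) < n := by omega
  have h1n : (1:ℕ) < n := by omega
  have hLn : n - 1 < n := by omega
  set F := Finset.univ.filter (fun s : Fin n → Bool => occ n s 0 = true) with hF
  have hd : HasDerivAt (fun τ => ∑ s ∈ F, x τ s)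
      (∑ s ∈ F,
        ((if occ n s (n-1) = true then α * x t (upd n s (n-1) false) else 0)
          + (if occ n s 0 = false then β * x t (upd n s 0 true) else 0)
          + (∑ k ∈ Finset.Icc 1 (n-1),
              if occ n s k = false ∧ occ n s (k-1) = true
                then h k * x t (upd n (upd n s k true) (k-1) false) else 0)
          - x t s * ((if occ n s (n-1) = false then α else 0)
              + (if occ n s 0 = true then β else 0)
              + ∑ k ∈ Finset.Icc 1 (n-1),
                  if occ n s k = true ∧ occ n s (k-1) = false then h k else 0))) t :=
    HasDerivAt.fun_sum (fun s _ => hx s t)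
  convert hd using 1
  -- Now prove the sum identity.
  rw [show (∑ s ∈ F,
        ((if occ n s (n-1) = true then α * x t (upd n s (n-1) false) else 0)
          + (if occ n s 0 = false then β * x t (upd n s 0 true) else 0)
          + (∑ k ∈ Finset.Icc 1 (n-1),
              if occ n s k = false ∧ occ n s (k-1) = true
                then h k * x t (upd n (upd n s k true) (k-1) false) else 0)
          - x t s * ((if occ n s (n-1) = false then α else 0)
              + (if occ n s 0 = true then β else 0)
              + ∑ k ∈ Finset.Icc 1 (n-1),
                  if occ n s k = true ∧ occ n s (k-1) = false then h k else 0)))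
      = (∑ s ∈ F, (if occ n s (n-1) = true then α * x t (upd n s (n-1) false) else 0))
        + (∑ s ∈ F, (if occ n s 0 = false then β * x t (upd n s 0 true) else 0))
        + (∑ s ∈ F, ∑ k ∈ Finset.Icc 1 (n-1),
              if occ n s k = false ∧ occ n s (k-1) = true
                then h k * x t (upd n (upd n s k true) (k-1) false) else 0)
        - ((∑ s ∈ F, x t s * (if occ n s (n-1) = false then α else 0))
            + (∑ s ∈ F, x t s * (if occ n s 0 = true then β else 0))
            + (∑ s ∈ F, x t s * ∑ k ∈ Finset.Icc 1 (n-1),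
                  if occ n s k = true ∧ occ n s (k-1) = false then h k else 0)) from by
    rw [← Finset.sum_add_distrib, ← Finset.sum_add_distrib, ← Finset.sum_add_distrib,
      ← Finset.sum_add_distrib, ← Finset.sum_sub_distrib]
    exact Finset.sum_congr rfl fun s _ => by ring]
  -- Individual pieces
  have hT2 : (∑ s ∈ F, (if occ n s 0 = false then β * x t (upd n s 0 true) else 0)) = 0 := by
    refine Finset.sum_eq_zero fun s hs => ?_
    rw [hF, Finset.mem_filter] at hs
    simp [hs.2]
  have hU2 : (∑ s ∈ F, x t s * (if occ n s 0 = true then β else 0)) = β * ∑ s ∈ F, x t s := by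
    rw [Finset.mul_sum]
    refine Finset.sum_congr rfl fun s hs => ?_
    rw [hF, Finset.mem_filter] at hs
    rw [if_pos hs.2, mul_comm]
  have hT1U1 : (∑ s ∈ F, (if occ n s (n-1) = true then α * x t (upd n s (n-1) false) else 0))
      = ∑ s ∈ F, x t s * (if occ n s (n-1) = false then α else 0) := by
    rw [hF, Finset.sum_filter, Finset.sum_filter]
    have hL : ∀ s : Fin n → Bool, occ n s (n-1) = s ⟨n-1, hLn⟩ := fun s => dif_pos hLn
    have h0 : ∀ s : Fin n → Bool, occ n s 0 = s ⟨0, h0n⟩ := fun s => dif_pos h0n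
    have hu : ∀ s : Fin n → Bool, upd n s (n-1) false = Function.update s ⟨n-1, hLn⟩ false :=
      fun s => dif_pos hLn
    simp only [hL, h0, hu]
    have := alpha_sum (n := n) ⟨0, h0n⟩ ⟨n-1, hLn⟩
      (by simp [Fin.ext_iff]; omega) α (x t)
    rw [this]
    refine Finset.sum_congr rfl fun s _ => ?_
    cases hs0 : s ⟨0, h0n⟩ <;> cases hsL : s ⟨n-1, hLn⟩ <;> simp [hs0, hsL, mul_comm]
  
  have hIcc : Finset.Icc 1 (n-1) = insert 1 (Finset.Icc 2 (n-1)) := by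
    ext m; simp only [Finset.mem_Icc, Finset.mem_insert]; omega
  have h1notin : (1:ℕ) ∉ Finset.Icc 2 (n-1) := by simp
  have key1 : (∑ s ∈ F, if occ n s 1 = false ∧ occ n s (1-1) = true
        then h 1 * x t (upd n (upd n s 1 true) (1-1) false) else 0)
      = h 1 * ∑ s ∈ Finset.univ.filter
          (fun s : Fin n → Bool => occ n s 1 = true ∧ occ n s 0 = false), x t s := by
    rw [hF, Finset.sum_filter, Finset.mul_sum, Finset.sum_filter]
    have e1 : ∀ s : Fin n → Bool, occ n s 1 = s ⟨1, h1n⟩ := fun s => dif_pos h1n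
    have e0 : ∀ s : Fin n → Bool, occ n s 0 = s ⟨0, h0n⟩ := fun s => dif_pos h0n
    have eu : ∀ s : Fin n → Bool, upd n (upd n s 1 true) (1-1) false
        = Function.update (Function.update s ⟨1, h1n⟩ true) ⟨0, h0n⟩ false := fun s => by
      unfold upd; rw [dif_pos h1n]; rw [show (1:ℕ)-1 = 0 from rfl, dif_pos h0n]
    simp only [show (1:ℕ)-1 = 0 from rfl, e1, e0, eu]
    exact hop_sum0 ⟨0, h0n⟩ ⟨1, h1n⟩ (by simp [Fin.ext_iff]) (h 1) (x t)
  have key3 : (∑ s ∈ F, if occ n s 1 = true ∧ occ n s (1-1) = false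
        then h 1 * x t s else 0) = 0 := by
    refine Finset.sum_eq_zero fun s hs => ?_
    rw [hF, Finset.mem_filter] at hs
    rw [show (1:ℕ)-1 = 0 from rfl]
    simp [hs.2]
  have key2 : ∀ k ∈ Finset.Icc 2 (n-1),
      (∑ s ∈ F, if occ n s k = false ∧ occ n s (k-1) = true
          then h k * x t (upd n (upd n s k true) (k-1) false) else 0)
      = ∑ s ∈ F, (if occ n s k = true ∧ occ n s (k-1) = false then h k * x t s else 0) := by
    intro k hk
    rw [Finset.mem_Icc] at hk
    obtain ⟨hk2, hkle⟩ := hk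
    have hkn : k < n := by omega
    have hk1n : k - 1 < n := by omega
    rw [hF, Finset.sum_filter, Finset.sum_filter]
    have e1 : ∀ s : Fin n → Bool, occ n s k = s ⟨k, hkn⟩ := fun s => dif_pos hkn
    have e2 : ∀ s : Fin n → Bool, occ n s (k-1) = s ⟨k-1, hk1n⟩ := fun s => dif_pos hk1n
    have e0 : ∀ s : Fin n → Bool, occ n s 0 = s ⟨0, h0n⟩ := fun s => dif_pos h0n
    have eu : ∀ s : Fin n → Bool, upd n (upd n s k true) (k-1) false
        = Function.update (Function.update s ⟨k, hkn⟩ true) ⟨k-1, hk1n⟩ false := fun s => by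
      unfold upd; rw [dif_pos hkn, dif_pos hk1n]
    simp only [e1, e2, e0, eu]
    exact hop_sum ⟨0, h0n⟩ ⟨k, hkn⟩ ⟨k-1, hk1n⟩
      (by simp only [ne_eq, Fin.mk.injEq]; omega)
      (by simp only [ne_eq, Fin.mk.injEq]; omega)
      (by simp only [ne_eq, Fin.mk.injEq]; omega) (h k) (x t)
  have hT3 : (∑ s ∈ F, ∑ k ∈ Finset.Icc 1 (n-1),
        if occ n s k = false ∧ occ n s (k-1) = true
          then h k * x t (upd n (upd n s k true) (k-1) false) else 0)
      = h 1 * (∑ s ∈ Finset.univ.filter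
            (fun s : Fin n → Bool => occ n s 1 = true ∧ occ n s 0 = false), x t s)
        + ∑ s ∈ F, x t s * ∑ k ∈ Finset.Icc 1 (n-1),
            (if occ n s k = true ∧ occ n s (k-1) = false then h k else 0) := by
    have hRHS : (∑ s ∈ F, x t s * ∑ k ∈ Finset.Icc 1 (n-1),
          (if occ n s k = true ∧ occ n s (k-1) = false then h k else 0))
        = ∑ s ∈ F, ∑ k ∈ Finset.Icc 1 (n-1),
            (if occ n s k = true ∧ occ n s (k-1) = false then h k * x t s else 0) := by
      refine Finset.sum_congr rfl fun s _ => ?_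
      rw [Finset.mul_sum]
      refine Finset.sum_congr rfl fun k _ => ?_
      by_cases hc : occ n s k = true ∧ occ n s (k-1) = false
      · rw [if_pos hc, if_pos hc, mul_comm]
      · rw [if_neg hc, if_neg hc, mul_zero]
    rw [hRHS, Finset.sum_comm, Finset.sum_comm (s := F), hIcc,
      Finset.sum_insert h1notin, Finset.sum_insert h1notin,
      key1, key3, Finset.sum_congr rfl key2]
    ring
  rw [hT2, hU2, hT1U1, hT3]
  ring
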